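/- Every domain D in the d-regular tree T_d with |D| ≥ 2 satisfies |R(D)| ≤ τ(D) ≤ |D| − 2, and the equality τ(D) = |D| − 2 holds if and only if ∂D = D. -/

import Mathlib

/-- Inner vertex boundary of a finite vertex set `D`: vertices of `D` having a neighbor
outside `D`. -/
noncomputable def innerBoundary {V : Type*} (G : SimpleGraph V) (D : Finset V) : Finset V := by
  classical exact D.filter (fun x => ∃ y, y ∉ D ∧ G.Adj x y)

/-- Outer vertex boundary of `D`: vertices outside `D` having a neighbor in `D`. -/
def outerBoundary {V : Type*} (G : SimpleGraph V) (D : Finset V) : Set V :=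
  {y | y ∉ D ∧ ∃ x ∈ D, G.Adj x y}

/-- Number of neighbors of `x` lying in `D`. -/
noncomputable def degIn {V : Type*} (G : SimpleGraph V) (D : Finset V) (x : V) : ℕ := by
  classical exact (D.filter (fun y => G.Adj x y)).card

/-- A domain: a finite nonempty vertex set whose induced subgraph is connected. -/
def IsGraphDomain {V : Type*} (G : SimpleGraph V) (D : Finset V) : Prop :=
  D.Nonempty ∧ (G.induce (↑D : Set V)).Connected

/-- `G` is a `d`-regular tree: connected, acyclic, and every vertex has degree `d`. -/
def IsRegularTree {V : Type*} (G : SimpleGraph V) (d : ℕ) : Prop :=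
  G.Connected ∧ G.IsAcyclic ∧ ∀ v : V, (G.neighborSet v).ncard = d

/-- Boundary branching excess `τ(D) = Σ_{x ∈ ∂D} (deg_D(x) − 1)`. -/
noncomputable def tauD {V : Type*} (G : SimpleGraph V) (D : Finset V) : ℕ :=
  ∑ x ∈ innerBoundary G D, (degIn G D x - 1)

/-- Residual boundary `R(D) = {x ∈ ∂D : deg_D(x) ≥ 2}`. -/
noncomputable def residualBoundary {V : Type*} (G : SimpleGraph V) (D : Finset V) : Finset V := by
  classical exact (innerBoundary G D).filter (fun x => 2 ≤ degIn G D x)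

/-- `D` is isoperimetrically optimal: its inner boundary is smallest among all domains
of the same cardinality. -/
def IsOptimal {V : Type*} (G : SimpleGraph V) (D : Finset V) : Prop :=
  ∀ D' : Finset V, IsGraphDomain G D' → D'.card = D.card →
    (innerBoundary G D).card ≤ (innerBoundary G D').card

open Finset in
private lemma sum_degIn_eq {V : Type*} (G : SimpleGraph V) (hG : G.IsAcyclic)
    (D : Finset V) (hconn : (G.induce (↑D : Set V)).Connected) :
    ∑ x ∈ D, degIn G D x = 2 * (D.card - 1) := by
  classical
  set G' := G.induce (↑D : Set V) with hG'
  haveI : Fintype (↑D : Set V) := FinsetCoe.fintype D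
  haveI : DecidableRel G'.Adj := Classical.decRel _
  have hacy : G'.IsAcyclic := by
    intro v c hc
    exact hG (c.map (SimpleGraph.Embedding.induce (G := G) (↑D : Set V)).toHom)
      (hc.map (SimpleGraph.Embedding.induce (G := G) (↑D : Set V)).injective)
  have htree : G'.IsTree := ⟨hconn, hacy⟩
  have hedges : G'.edgeFinset.card + 1 = Fintype.card (↑D : Set V) :=
    htree.card_edgeFinset
  have hsum : ∑ v : (↑D : Set V), G'.degree v = 2 * G'.edgeFinset.card :=
    SimpleGraph.sum_degrees_eq_twice_card_edges G'
  have hdeg : ∀ v : (↑D : Set V), G'.degree v = degIn G D ↑v := by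
    intro v
    rw [SimpleGraph.degree, degIn]
    refine Finset.card_bij (fun a _ => (↑a : V)) ?_ ?_ ?_
    · intro a ha
      simp only [SimpleGraph.mem_neighborFinset] at ha
      simp only [Finset.mem_filter]
      exact ⟨a.2, ha⟩
    · intro a _ b _ h
      exact Subtype.ext h
    · intro y hy
      simp only [Finset.mem_filter] at hy
      exact ⟨⟨y, hy.1⟩, by rw [SimpleGraph.mem_neighborFinset]; exact hy.2, rfl⟩
  have hcard : Fintype.card (↑D : Set V) = D.card := by
    exact (Fintype.card_congr (Equiv.subtypeEquivRight (fun x => Finset.mem_coe))).trans (Fintype.card_coe D)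
  have key : ∑ v : (↑D : Set V), degIn G D ↑v = 2 * (D.card - 1) := by
    calc ∑ v : (↑D : Set V), degIn G D ↑v
        = ∑ v : (↑D : Set V), G'.degree v := by simp [hdeg]
      _ = 2 * G'.edgeFinset.card := hsum
      _ = 2 * (D.card - 1) := by omega
  rw [← Finset.sum_coe_sort D (degIn G D), ← key]
  convert (Fintype.sum_equiv (Equiv.subtypeEquivRight (p := fun x : V => x ∈ (↑D : Set V)) (q := fun x => x ∈ D) (fun x => Finset.mem_coe))
    _ _ (fun v => rfl)).symm

private lemma one_le_degIn {V : Type*} (G : SimpleGraph V) (D : Finset V)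
    (hconn : (G.induce (↑D : Set V)).Connected) (hcard : 2 ≤ D.card)
    {x : V} (hx : x ∈ D) : 1 ≤ degIn G D x := by
  classical
  obtain ⟨y, hy, hyx⟩ : ∃ y ∈ D, y ≠ x := by
    by_contra h
    push_neg at h
    have : D ⊆ {x} := fun z hz => Finset.mem_singleton.2 (h z hz)
    have := Finset.card_le_card this
    simp at this; omega
  obtain ⟨w⟩ := hconn.preconnected ⟨x, hx⟩ ⟨y, hy⟩
  cases w with
  | nil => exact (hyx rfl).elim
  | cons h p =>
    rename_i b
    rw [degIn]
    have hb : (↑b : V) ∈ D.filter (fun y => G.Adj x y) := by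
      refine Finset.mem_filter.2 ⟨b.2, h⟩
    exact Finset.card_pos.2 ⟨_, hb⟩

private lemma degIn_interior {V : Type*} (d : ℕ) (hd : 2 ≤ d) (G : SimpleGraph V)
    (hreg : ∀ v : V, (G.neighborSet v).ncard = d) (D : Finset V)
    {x : V} (hx : x ∈ D) (hx' : x ∉ innerBoundary G D) : degIn G D x = d := by
  classical
  have hall : ∀ y, G.Adj x y → y ∈ D := by
    intro y hy
    by_contra hyD
    exact hx' (Finset.mem_filter.2 ⟨hx, y, hyD, hy⟩)
  have hfin : (G.neighborSet x).Finite := by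
    by_contra h
    have := Set.Infinite.ncard h
    rw [hreg x] at this; omega
  have : D.filter (fun y => G.Adj x y) = hfin.toFinset := by
    ext y
    simp only [Finset.mem_filter, Set.Finite.mem_toFinset, SimpleGraph.mem_neighborSet]
    exact ⟨fun h => h.2, fun h => ⟨hall y h, h⟩⟩
  rw [degIn, this, ← Set.ncard_eq_toFinset_card _ hfin, hreg x]

/-- For every domain `D` with `|D| ≥ 2`: `|R(D)| ≤ τ(D) ≤ |D| − 2`, with equality
`τ(D) = |D| − 2` iff `∂D = D`. -/
theorem stmt_9 {V : Type*} (d : ℕ) (hd : 2 ≤ d) (T : SimpleGraph V)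
    (hT : IsRegularTree T d) (D : Finset V) (hD : IsGraphDomain T D) (hcard : 2 ≤ D.card) :
    (residualBoundary T D).card ≤ tauD T D ∧
    tauD T D ≤ D.card - 2 ∧
    (tauD T D = D.card - 2 ↔ innerBoundary T D = D) := by
  classical
  obtain ⟨hTconn, hTacy, hreg⟩ := hT
  obtain ⟨hDne, hDconn⟩ := hD
  set B := innerBoundary T D with hB
  set I := D \ B with hI
  have hBsub : B ⊆ D := Finset.filter_subset _ _
  have hdegpos : ∀ x ∈ D, 1 ≤ degIn T D x :=
    fun x hx => one_le_degIn T D hDconn hcard hx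
  have hsumB : ∑ x ∈ B, degIn T D x = tauD T D + B.card := by
    have h1 : ∀ x ∈ B, degIn T D x = (degIn T D x - 1) + 1 := fun x hx => by
      have := hdegpos x (hBsub hx); omega
    rw [Finset.sum_congr rfl h1, Finset.sum_add_distrib, Finset.sum_const, smul_eq_mul,
      mul_one, tauD, ← hB]
  have hsumI : ∑ x ∈ I, degIn T D x = d * I.card := by
    have h1 : ∀ x ∈ I, degIn T D x = d := by
      intro x hx
      rw [hI, Finset.mem_sdiff] at hx
      exact degIn_interior d hd T hreg D hx.1 hx.2
    rw [Finset.sum_congr rfl h1, Finset.sum_const, smul_eq_mul, mul_comm]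
  have hsplit : ∑ x ∈ I, degIn T D x + ∑ x ∈ B, degIn T D x = ∑ x ∈ D, degIn T D x :=
    Finset.sum_sdiff hBsub
  have htotal : ∑ x ∈ D, degIn T D x = 2 * (D.card - 1) :=
    sum_degIn_eq T hTacy D hDconn
  have hmain : d * I.card + (tauD T D + B.card) = 2 * (D.card - 1) := by
    rw [← hsumI, ← hsumB, hsplit, htotal]
  have hIcard : I.card = D.card - B.card := Finset.card_sdiff_of_subset hBsub
  have hBle : B.card ≤ D.card := Finset.card_le_card hBsub
  have h2i : 2 * I.card ≤ d * I.card := Nat.mul_le_mul_right _ hd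
  have hz : I.card = 0 → d * I.card = 0 := fun h => by rw [h, Nat.mul_zero]
  have hiff : B = D ↔ I.card = 0 := by
    rw [Finset.card_eq_zero, hI, Finset.sdiff_eq_empty_iff_subset]
    exact ⟨fun h => h ▸ Finset.Subset.refl _, fun h => Finset.Subset.antisymm hBsub h⟩
  have hR : (residualBoundary T D).card ≤ tauD T D := by
    rw [residualBoundary, tauD]
    calc ((innerBoundary T D).filter (fun x => 2 ≤ degIn T D x)).card
        = ∑ x ∈ (innerBoundary T D).filter (fun x => 2 ≤ degIn T D x), 1 := by
          simp
      _ ≤ ∑ x ∈ (innerBoundary T D).filter (fun x => 2 ≤ degIn T D x),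
            (degIn T D x - 1) := Finset.sum_le_sum (fun x hx => by
          have := (Finset.mem_filter.1 hx).2; omega)
      _ ≤ ∑ x ∈ innerBoundary T D, (degIn T D x - 1) :=
          Finset.sum_le_sum_of_subset (Finset.filter_subset _ _)
  refine ⟨hR, ?_, ?_⟩
  · generalize hE : d * I.card = e at hmain h2i
    omega
  · rw [hiff]
    generalize hE : d * I.card = e at hmain h2i hz
    omega
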